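/- Let K/ℚ_p be a finite extension with ramification index e and residue degree f, and let L be a ℤ_p-lattice in K of rank m that admits an orthogonal basis α_1, …, α_m with |α_1|_p = ⋯ = |α_f|_p = λ_1 > |α_{f+1}|_p ≥ ⋯ ≥ |α_m|_p > |p·α_1|_p. Suppose β_1, …, β_k ∈ L with |β_i|_p = λ_1 for all i and |∑_{i=1}^k b_i β_i|_p = λ_1 for every nonzero (b_1,…,b_k) ∈ {0,…,p−1}^k. Then k ≤ f. -/

import Mathlib

theorem stmt16 {p : ℕ} [Fact p.Prime] {K : Type*} [NormedField K]
    [Algebra ℚ_[p] K] [FiniteDimensional ℚ_[p] K] [IsUltrametricDist K]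
    (hext : ∀ x : ℚ_[p], ‖algebraMap ℚ_[p] K x‖ = ‖x‖)
    (e f : ℕ) (hef : e * f = Module.finrank ℚ_[p] K) (hf0 : 0 < f)
    {m : ℕ} (hfm : f < m) (α : Fin m → K)
    (hindep : LinearIndependent ℚ_[p] α)
    -- α is an orthogonal basis of the lattice L
    (horth : ∀ a : Fin m → ℚ_[p],
      ‖∑ i, a i • α i‖ =
        Finset.univ.sup' ⟨⟨0, by omega⟩, Finset.mem_univ _⟩ (fun i => ‖a i • α i‖))
    (lam : ℝ)
    (hfirst : ∀ i : Fin m, (i : ℕ) < f → ‖α i‖ = lam)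
    (hdrop : ∀ i : Fin m, f ≤ (i : ℕ) → ‖α i‖ < lam)
    (hsort : ∀ i j : Fin m, f ≤ (i : ℕ) → i ≤ j → ‖α j‖ ≤ ‖α i‖)
    (hp : ∀ i : Fin m, ‖(p : ℚ_[p]) • α ⟨0, by omega⟩‖ < ‖α i‖)
    {k : ℕ} (β : Fin k → K)
    (hβL : ∀ i, β i ∈ Set.range (fun a : Fin m → ℤ_[p] => ∑ j, ((a j : ℚ_[p])) • α j))
    (hβnorm : ∀ i, ‖β i‖ = lam)
    (hcomb : ∀ b : Fin k → ℕ, (∀ i, b i < p) → b ≠ 0 →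
      ‖∑ i, ((b i : ℚ_[p])) • β i‖ = lam) :
    k ≤ f := by
  have hns : ∀ (x : ℚ_[p]) (y : K), ‖x • y‖ = ‖x‖ * ‖y‖ := fun x y => by
    rw [Algebra.smul_def, norm_mul, hext]
  by_contra hk
  push_neg at hk
  have hβL' : ∀ i, ∃ c : Fin m → ℤ_[p], (∑ j, ((c j : ℚ_[p])) • α j) = β i :=
    fun i => hβL i
  choose a ha using hβL'
  -- residue vectors
  set v : Fin k → (Fin f → ZMod p) :=
    fun i j => PadicInt.toZMod (a i ⟨j, j.2.trans hfm⟩) with hv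
  have hcard : ¬ LinearIndependent (ZMod p) v := by
    intro h
    have := h.fintype_card_le_finrank
    simp [Module.finrank_pi] at this
    omega
  rw [Fintype.not_linearIndependent_iff] at hcard
  obtain ⟨g, hg0, i0, hgi0⟩ := hcard
  set b : Fin k → ℕ := fun i => (g i).val with hbdef
  have hb1 : ∀ i, b i < p := fun i => ZMod.val_lt _
  have hbne : b ≠ 0 := by
    intro hb
    apply hgi0
    have : b i0 = 0 := by rw [hb]; rfl
    simpa [hbdef, ZMod.val_eq_zero] using this
  have heq := hcomb b hb1 hbne
  set c : Fin m → ℤ_[p] := fun j => ∑ i, ((b i : ℤ_[p])) * a i j with hcdef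
  have hsum : ∑ i, ((b i : ℚ_[p])) • β i = ∑ j, ((c j : ℚ_[p])) • α j := by
    calc ∑ i, ((b i : ℚ_[p])) • β i
        = ∑ i, ∑ j, (((b i : ℚ_[p])) * ((a i j : ℚ_[p]))) • α j := by
          refine Finset.sum_congr rfl fun i _ => ?_
          rw [← ha i, Finset.smul_sum]
          simp [mul_smul]
      _ = ∑ j, ((c j : ℚ_[p])) • α j := by
          rw [Finset.sum_comm]
          refine Finset.sum_congr rfl fun j _ => ?_
          rw [← Finset.sum_smul]
          congr 1
          simp only [hcdef]
          have hmap : ∀ s : Finset (Fin k),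
              ((∑ i ∈ s, ((b i : ℤ_[p])) * a i j : ℤ_[p]) : ℚ_[p]) =
                ∑ i ∈ s, ((b i : ℚ_[p])) * ((a i j : ℚ_[p])) := by
            intro s
            induction s using Finset.induction with
            | empty => simp
            | @insert x s hx ih =>
              rw [Finset.sum_insert hx, Finset.sum_insert hx, PadicInt.coe_add,
                PadicInt.coe_mul, PadicInt.coe_natCast, ih]
          rw [hmap]
  have lam_lt : ∀ j : Fin m, ‖((c j : ℚ_[p])) • α j‖ < lam := by
    intro j
    rw [hns]
    by_cases hj : (j : ℕ) < f
    · -- c j is divisible by p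
      have hker : PadicInt.toZMod (c j) = 0 := by
        have hval : ∀ i, PadicInt.toZMod ((b i : ℤ_[p])) = g i := by
          intro i
          simp [hbdef, ZMod.natCast_val, ZMod.cast_id]
        have : PadicInt.toZMod (c j) = ∑ i, g i * v i ⟨j, hj⟩ := by
          simp [hcdef, map_sum, map_mul, hval, hv]
        rw [this]
        have := congrFun hg0 ⟨j, hj⟩
        simpa using this
      have hdvd : (p : ℤ_[p]) ∣ c j := by
        have hmem : c j ∈ RingHom.ker (PadicInt.toZMod (p := p)) := hker
        rwa [PadicInt.ker_toZMod, PadicInt.maximalIdeal_eq_span_p, Ideal.mem_span_singleton] at hmem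
      obtain ⟨d, hd⟩ := hdvd
      have hdle : ‖((d : ℚ_[p]))‖ ≤ 1 := by
        rw [PadicInt.padic_norm_e_of_padicInt]; exact PadicInt.norm_le_one d
      have hnormc : ‖((c j : ℚ_[p]))‖ ≤ ‖(p : ℚ_[p])‖ := by
        rw [hd]
        push_cast
        rw [norm_mul]
        calc ‖(p : ℚ_[p])‖ * ‖((d : ℚ_[p]))‖ ≤ ‖(p : ℚ_[p])‖ * 1 :=
              mul_le_mul_of_nonneg_left hdle (norm_nonneg _)
          _ = ‖(p : ℚ_[p])‖ := mul_one _
      calc ‖((c j : ℚ_[p]))‖ * ‖α j‖ ≤ ‖(p : ℚ_[p])‖ * ‖α j‖ :=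
            mul_le_mul_of_nonneg_right hnormc (norm_nonneg _)
        _ = ‖(p : ℚ_[p]) • α ⟨0, by omega⟩‖ := by
            rw [hns, hfirst ⟨0, by omega⟩ hf0, hfirst j hj]
        _ < ‖α ⟨f, hfm⟩‖ := hp ⟨f, hfm⟩
        _ < lam := hdrop ⟨f, hfm⟩ (le_refl _)
    · push_neg at hj
      have h1 : ‖((c j : ℚ_[p]))‖ ≤ 1 := by
        rw [PadicInt.padic_norm_e_of_padicInt]; exact PadicInt.norm_le_one (c j)
      calc ‖((c j : ℚ_[p]))‖ * ‖α j‖ ≤ 1 * ‖α j‖ :=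
            mul_le_mul_of_nonneg_right h1 (norm_nonneg _)
        _ = ‖α j‖ := one_mul _
        _ < lam := hdrop j hj
  rw [hsum, horth] at heq
  have hlt : (Finset.univ.sup' ⟨⟨0, by omega⟩, Finset.mem_univ _⟩
      (fun j => ‖((c j : ℚ_[p])) • α j‖)) < lam := by
    exact (Finset.sup'_lt_iff _).mpr fun j _ => lam_lt j
  rw [heq] at hlt
  exact lt_irrefl _ hlt
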